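/- arXiv:1204.1924 — 2 statements merged into one kernel-verified Lean document; each statement's English description precedes it below -/
import Mathlib

section
/- Naïve fixed-frame strategy: For every integer b ≥ 1, setting F = 2^b, the rate pair (R_1, R_2) = (log₂(F)/(2F), log₂(F)/(2F)), whose sum-rate is R_1 + R_2 = log₂(F)/F bits per channel use, is achievable with U = 1 energy unit. -/
open scoped BigOperators

namespace TwoWayEnergy

/-- Transcript of the first `i` channel uses: `(transcript f1 f2 i).1` is the list of
symbols sent by Node 1 (of length `i`), and `.2` those sent by Node 2, when Node `j`
uses the strategy `fj : List Bool → Bool` mapping its past received symbols to its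
currently transmitted symbol. -/
def transcript (f1 f2 : List Bool → Bool) : ℕ → List Bool × List Bool
  | 0 => ([], [])
  | i + 1 =>
      let p := transcript f1 f2 i
      (p.1 ++ [f1 p.2], p.2 ++ [f2 p.1])

/-- Symbol transmitted by Node 1 at channel use `i` (0-indexed); `true` = "1". -/
def X1 (f1 f2 : List Bool → Bool) (i : ℕ) : Bool := f1 (transcript f1 f2 i).2

/-- Symbol transmitted by Node 2 at channel use `i` (0-indexed); `true` = "1". -/
def X2 (f1 f2 : List Bool → Bool) (i : ℕ) : Bool := f2 (transcript f1 f2 i).1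

/-- Number of energy units held by Node 1 just before channel use `i`,
starting from the initial state `u`: transmitting a "1" costs one unit and
receiving a "1" harvests one unit. -/
def state (f1 f2 : List Bool → Bool) (u : ℤ) : ℕ → ℤ
  | 0 => u
  | i + 1 => state f1 f2 u i - (if X1 f1 f2 i then 1 else 0) + (if X2 f1 f2 i then 1 else 0)

/-- Number of messages of a rate-`R` blocklength-`n` code. -/
noncomputable def msgCount (n : ℕ) (R : ℝ) : ℕ := ⌈(2 : ℝ) ^ ((n : ℝ) * R)⌉₊

/-- An `(n, R1, R2, U)` code for the two-way noiseless binary channel with energy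
exchange: encoders map (own message, initial state, past received symbols) to the
current symbol, subject to the energy constraints (a node holding no energy must send
"0"); decoders map (received sequence, own message, initial state) to an estimate of
the other message, and must be correct for every message pair and initial state. -/
structure Code (n : ℕ) (R1 R2 : ℝ) (U : ℕ) where
  f1 : Fin (msgCount n R1) → ℕ → List Bool → Bool
  f2 : Fin (msgCount n R2) → ℕ → List Bool → Bool
  g1 : (Fin n → Bool) → Fin (msgCount n R1) → ℕ → Fin (msgCount n R2)
  g2 : (Fin n → Bool) → Fin (msgCount n R2) → ℕ → Fin (msgCount n R1)
  energy1 : ∀ m1 m2 u, u ≤ U → ∀ i < n,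
    state (f1 m1 u) (f2 m2 u) (u : ℤ) i = 0 → X1 (f1 m1 u) (f2 m2 u) i = false
  energy2 : ∀ m1 m2 u, u ≤ U → ∀ i < n,
    state (f1 m1 u) (f2 m2 u) (u : ℤ) i = (U : ℤ) → X2 (f1 m1 u) (f2 m2 u) i = false
  decode1 : ∀ m1 m2 u, u ≤ U →
    g1 (fun i : Fin n => X2 (f1 m1 u) (f2 m2 u) (i : ℕ)) m1 u = m2
  decode2 : ∀ m1 m2 u, u ≤ U →
    g2 (fun i : Fin n => X1 (f1 m1 u) (f2 m2 u) (i : ℕ)) m2 u = m1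

/-- A rate pair of nonnegative reals is achievable with `U` energy units if codes
exist for all sufficiently large blocklengths. -/
def Achievable (U : ℕ) (R1 R2 : ℝ) : Prop :=
  0 ≤ R1 ∧ 0 ≤ R2 ∧ ∃ n0 : ℕ, ∀ n : ℕ, n0 ≤ n → Nonempty (Code n R1 R2 U)

/-- The capacity region `C(U)`: closure of the set of achievable rate pairs. -/
def CapacityRegion (U : ℕ) : Set (ℝ × ℝ) :=
  closure {rs : ℝ × ℝ | Achievable U rs.1 rs.2}

/-- Binary entropy function (base-2 logarithm), with `H(0) = H(1) = 0`. -/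
noncomputable def binEnt (p : ℝ) : ℝ :=
  -(p * Real.logb 2 p) - (1 - p) * Real.logb 2 (1 - p)

/-! ### Auxiliary lemmas -/

lemma transcript_len (f1 f2 : List Bool → Bool) (i : ℕ) :
    (transcript f1 f2 i).1.length = i ∧ (transcript f1 f2 i).2.length = i := by
  induction i with
  | zero => simp [transcript]
  | succ i ih => simp [transcript, ih.1, ih.2]

lemma X1_eq (F G : ℕ → Bool) (i : ℕ) :
    X1 (fun h => F h.length) (fun h => G h.length) i = F i := by
  have h := (transcript_len (fun h => F h.length) (fun h => G h.length) i).2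
  simp only [X1]; rw [h]

lemma X2_eq (F G : ℕ → Bool) (i : ℕ) :
    X2 (fun h => F h.length) (fun h => G h.length) i = G i := by
  have h := (transcript_len (fun h => F h.length) (fun h => G h.length) i).1
  simp only [X2]; rw [h]

lemma state_formula (f1 f2 : List Bool → Bool) (u : ℕ) (hu : u ≤ 1)
    (D : ℕ → ℕ) (hD : ∀ t, D t ≤ 2)
    (h1 : ∀ i, X1 f1 f2 i = decide ((i / 3 + u) % 2 = 1 ∧ i % 3 = D (i / 3)))
    (h2 : ∀ i, X2 f1 f2 i = decide ((i / 3 + u) % 2 = 0 ∧ i % 3 = D (i / 3))) :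
    ∀ i, state f1 f2 (u : ℤ) i =
      if (i / 3 + u) % 2 = 1 then (if i % 3 ≤ D (i / 3) then 1 else 0)
      else (if i % 3 ≤ D (i / 3) then 0 else 1) := by
  intro i
  induction i with
  | zero =>
    simp only [state, Nat.zero_div, Nat.zero_mod, Nat.zero_add]
    interval_cases u <;> norm_num
  | succ i ih =>
    have hd := hD (i / 3)
    have hd' := hD (i / 3 + 1)
    rw [state, ih, h1, h2]
    simp only [decide_eq_true_eq]
    by_cases hr : i % 3 = 2
    · have e1 : (i + 1) / 3 = i / 3 + 1 := by omega
      have e2 : (i + 1) % 3 = 0 := by omega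
      rw [e1, e2]
      split_ifs <;> omega
    · have e1 : (i + 1) / 3 = i / 3 := by omega
      have e2 : (i + 1) % 3 = i % 3 + 1 := by omega
      rw [e1, e2]
      split_ifs <;> omega

/-- base-3 digit -/
def dig (a k : ℕ) : ℕ := a / 3 ^ k % 3

lemma dig_lt (a k : ℕ) : dig a k < 3 := Nat.mod_lt _ (by norm_num)

lemma digits_determine : ∀ (K a c : ℕ), a < 3 ^ K → c < 3 ^ K →
    (∀ k < K, dig a k = dig c k) → a = c := by
  intro K
  induction K with
  | zero => intro a c ha hc _; simp at ha hc; omega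
  | succ K ih =>
    intro a c ha hc h
    have h0 : a % 3 = c % 3 := by
      have := h 0 (by omega); simpa [dig] using this
    have h1 : a / 3 = c / 3 := by
      apply ih
      · have : a < 3 * 3 ^ K := by rw [pow_succ] at ha; omega
        omega
      · have : c < 3 * 3 ^ K := by rw [pow_succ] at hc; omega
        omega
      · intro k hk
        have := h (k + 1) (by omega)
        simpa [dig, Nat.div_div_eq_div_mul, pow_succ, mul_comm] using this
    omega

set_option maxRecDepth 100000 in
lemma key_pow (n : ℕ) (hn : 600 ≤ n) : 2 ^ (3 * n + 9) ≤ 3 ^ (2 * n - 10) := by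
  induction n, hn using Nat.le_induction with
  | base => exact Nat.le_of_ble_eq_true rfl
  | succ n hn ih =>
    have e1 : 3 * (n + 1) + 9 = (3 * n + 9) + 3 := by ring
    have e2 : 2 * (n + 1) - 10 = (2 * n - 10) + 2 := by omega
    rw [e1, e2]
    calc 2 ^ (3 * n + 9 + 3) = 2 ^ (3 * n + 9) * 2 ^ 3 := pow_add 2 _ 3
      _ ≤ 3 ^ (2 * n - 10) * 3 ^ 2 := Nat.mul_le_mul ih (by norm_num)
      _ = 3 ^ (2 * n - 10 + 2) := (pow_add 3 _ 2).symm

lemma pow_bound (n : ℕ) (hn : 600 ≤ n) : 2 ^ ((n + 3) / 4) ≤ 3 ^ (n / 6) := by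
  have h12 : (2 ^ ((n + 3) / 4)) ^ 12 ≤ (3 ^ (n / 6)) ^ 12 := by
    rw [← pow_mul, ← pow_mul]
    calc 2 ^ ((n + 3) / 4 * 12) ≤ 2 ^ (3 * n + 9) :=
          Nat.pow_le_pow_right (by norm_num) (by omega)
      _ ≤ 3 ^ (2 * n - 10) := key_pow n hn
      _ ≤ 3 ^ (n / 6 * 12) := Nat.pow_le_pow_right (by norm_num) (by omega)
  exact (Nat.pow_le_pow_iff_left (by norm_num)).mp h12

lemma two_mul_le_pow (b : ℕ) : 2 * b ≤ 2 ^ b := by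
  induction b with
  | zero => norm_num
  | succ b ih =>
    rcases Nat.eq_zero_or_pos b with h | h
    · subst h; norm_num
    · have h2 : 2 ≤ 2 ^ b := by
        calc 2 = 2 ^ 1 := by norm_num
        _ ≤ 2 ^ b := Nat.pow_le_pow_right (by norm_num) h
      rw [pow_succ]; omega

/-- the fixed frame-of-3 encoder: node with parity `p` puts its single `1` of frame
`t = i / 3` at the in-frame position given by the `t/2`-th base-3 digit of its message. -/
def enc (p a u i : ℕ) : Bool :=
  decide ((i / 3 + u) % 2 = p ∧ i % 3 = dig a (i / 3 / 2))

lemma X1_enc (p q a c u i : ℕ) :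
    X1 (fun h => enc p a u h.length) (fun h => enc q c u h.length) i = enc p a u i :=
  X1_eq (enc p a u) (enc q c u) i

lemma X2_enc (p q a c u i : ℕ) :
    X2 (fun h => enc p a u h.length) (fun h => enc q c u h.length) i = enc q c u i :=
  X2_eq (enc p a u) (enc q c u) i

lemma enc1_formula (a c u i : ℕ) :
    enc 1 a u i = decide ((i / 3 + u) % 2 = 1 ∧
      i % 3 = (fun t => if (t + u) % 2 = 1 then dig a (t / 2) else dig c (t / 2)) (i / 3)) := by
  unfold enc
  by_cases hp : (i / 3 + u) % 2 = 1 <;> simp [hp]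

lemma enc0_formula (a c u i : ℕ) :
    enc 0 c u i = decide ((i / 3 + u) % 2 = 0 ∧
      i % 3 = (fun t => if (t + u) % 2 = 1 then dig a (t / 2) else dig c (t / 2)) (i / 3)) := by
  unfold enc
  by_cases hp : (i / 3 + u) % 2 = 0
  · have hp' : ¬((i / 3 + u) % 2 = 1) := by omega
    simp [hp, hp']
  · have hp' : (i / 3 + u) % 2 = 1 := by omega
    simp [hp, hp']

/-- each message is determined by its transmitted sequence -/
lemma enc_inj (M K n p u : ℕ) (hMK : M ≤ 3 ^ K) (hn : 6 * K ≤ n) (hp : p ≤ 1)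
    (a c : ℕ) (ha : a < M) (hc : c < M)
    (h : ∀ i < n, enc p a u i = enc p c u i) : a = c := by
  refine digits_determine K a c (lt_of_lt_of_le ha hMK) (lt_of_lt_of_le hc hMK) ?_
  intro k hk
  have hdl := dig_lt a k
  have hdl' := dig_lt c k
  set t := 2 * k + (p + u) % 2 with ht
  have hi : 3 * t + dig a k < n := by omega
  have h1 := h (3 * t + dig a k) hi
  have e1 : (3 * t + dig a k) / 3 = t := by omega
  have e2 : (3 * t + dig a k) % 3 = dig a k := by omega
  have e3 : t / 2 = k := by omega
  have e4 : (t + u) % 2 = p := by omega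
  unfold enc at h1
  rw [e1, e2, e3, e4] at h1
  simpa using h1

/-- **Naïve fixed-frame strategy.** For every frame size `F = 2^b` with `b ≥ 1`, the
symmetric rate pair `(log₂ F / (2F), log₂ F / (2F))`, whose sum-rate is `log₂ F / F`
bits per channel use, is achievable with `U = 1` energy unit. -/
theorem naive_frame_strategy (b : ℕ) (hb : 1 ≤ b) :
    Real.logb 2 ((2 : ℝ) ^ b) / (2 * (2 : ℝ) ^ b)
        + Real.logb 2 ((2 : ℝ) ^ b) / (2 * (2 : ℝ) ^ b)
      = Real.logb 2 ((2 : ℝ) ^ b) / (2 : ℝ) ^ b ∧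
    Achievable 1 (Real.logb 2 ((2 : ℝ) ^ b) / (2 * (2 : ℝ) ^ b))
      (Real.logb 2 ((2 : ℝ) ^ b) / (2 * (2 : ℝ) ^ b)) := by
  have h2pos : (0 : ℝ) < (2 : ℝ) ^ b := by positivity
  constructor
  · field_simp
    ring
  set r := Real.logb 2 ((2 : ℝ) ^ b) / (2 * (2 : ℝ) ^ b) with hrdef
  have hlog : Real.logb 2 ((2 : ℝ) ^ b) = b := by
    rw [Real.logb_pow, Real.logb_self_eq_one (by norm_num)]
    ring
  have hrval : r = (b : ℝ) / (2 * (2 : ℝ) ^ b) := by rw [hrdef, hlog]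
  have hrnn : 0 ≤ r := by rw [hrval]; positivity
  have hr4 : r ≤ 1 / 4 := by
    rw [hrval, div_le_div_iff₀ (by positivity) (by norm_num)]
    have := two_mul_le_pow b
    have h' : (2 * b : ℝ) ≤ (2 : ℝ) ^ b := by exact_mod_cast this
    nlinarith
  refine ⟨hrnn, hrnn, 600, fun n hn => ?_⟩
  -- counting bound
  have hM : msgCount n r ≤ 3 ^ (n / 6) := by
    refine le_trans ?_ (pow_bound n hn)
    rw [msgCount]
    apply Nat.ceil_le.mpr
    have h1 : (n : ℝ) * r ≤ (((n + 3) / 4 : ℕ) : ℝ) := by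
      calc (n : ℝ) * r ≤ (n : ℝ) * (1 / 4) :=
            mul_le_mul_of_nonneg_left hr4 (by positivity)
        _ ≤ (((n + 3) / 4 : ℕ) : ℝ) := by
            rw [mul_one_div, div_le_iff₀ (by norm_num)]
            have : n ≤ ((n + 3) / 4) * 4 := by omega
            exact_mod_cast this
    calc (2 : ℝ) ^ ((n : ℝ) * r) ≤ (2 : ℝ) ^ ((((n + 3) / 4 : ℕ) : ℝ)) :=
          Real.rpow_le_rpow_of_exponent_le (by norm_num) h1
      _ = ((2 ^ ((n + 3) / 4) : ℕ) : ℝ) := by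
          rw [Real.rpow_natCast]; push_cast; ring
  have hMpos : 0 < msgCount n r :=
    Nat.ceil_pos.mpr (Real.rpow_pos_of_pos (by norm_num) _)
  haveI : Nonempty (Fin (msgCount n r)) := ⟨⟨0, hMpos⟩⟩
  have hK : 6 * (n / 6) ≤ n := by omega
  -- injectivity of the two encoding maps
  have hinj1 : ∀ (m2 : Fin (msgCount n r)) (u : ℕ), Function.Injective
      (fun m1 : Fin (msgCount n r) => fun i : Fin n =>
        X1 (fun h => enc 1 (m1 : ℕ) u h.length) (fun h => enc 0 (m2 : ℕ) u h.length) (i : ℕ)) := by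
    intro m2 u a c hEq
    apply Fin.ext
    refine enc_inj (msgCount n r) (n / 6) n 1 u hM hK (le_refl 1) _ _ a.isLt c.isLt ?_
    intro i hi
    have := congrFun hEq ⟨i, hi⟩
    simpa only [X1_enc] using this
  have hinj2 : ∀ (m1 : Fin (msgCount n r)) (u : ℕ), Function.Injective
      (fun m2 : Fin (msgCount n r) => fun i : Fin n =>
        X2 (fun h => enc 1 (m1 : ℕ) u h.length) (fun h => enc 0 (m2 : ℕ) u h.length) (i : ℕ)) := by
    intro m1 u a c hEq
    apply Fin.ext
    refine enc_inj (msgCount n r) (n / 6) n 0 u hM hK (by norm_num) _ _ a.isLt c.isLt ?_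
    intro i hi
    have := congrFun hEq ⟨i, hi⟩
    simpa only [X2_enc] using this
  -- state formula for any message pair and initial state u ≤ 1
  have hstate : ∀ (m1 m2 : Fin (msgCount n r)) (u : ℕ), u ≤ 1 → ∀ i,
      state (fun h => enc 1 (m1 : ℕ) u h.length) (fun h => enc 0 (m2 : ℕ) u h.length) (u : ℤ) i =
        if (i / 3 + u) % 2 = 1
        then (if i % 3 ≤ (if (i / 3 + u) % 2 = 1 then dig (m1 : ℕ) (i / 3 / 2) else dig (m2 : ℕ) (i / 3 / 2)) then 1 else 0)
        else (if i % 3 ≤ (if (i / 3 + u) % 2 = 1 then dig (m1 : ℕ) (i / 3 / 2) else dig (m2 : ℕ) (i / 3 / 2)) then 0 else 1) := by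
    intro m1 m2 u hu
    exact state_formula _ _ u hu
      (fun t => if (t + u) % 2 = 1 then dig (m1 : ℕ) (t / 2) else dig (m2 : ℕ) (t / 2))
      (fun t => by
        show (if (t + u) % 2 = 1 then dig (m1 : ℕ) (t / 2) else dig (m2 : ℕ) (t / 2)) ≤ 2
        split <;> exact Nat.lt_succ_iff.mp (dig_lt _ _))
      (fun i => by rw [X1_enc]; exact enc1_formula _ (m2 : ℕ) u i)
      (fun i => by rw [X2_enc]; exact enc0_formula (m1 : ℕ) _ u i)
  refine ⟨⟨fun m1 u h => enc 1 (m1 : ℕ) u h.length,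
          fun m2 u h => enc 0 (m2 : ℕ) u h.length,
          fun X m1 u => Function.invFun
            (fun m2 : Fin (msgCount n r) => fun i : Fin n =>
              X2 (fun h => enc 1 (m1 : ℕ) u h.length) (fun h => enc 0 (m2 : ℕ) u h.length) (i : ℕ)) X,
          fun X m2 u => Function.invFun
            (fun m1 : Fin (msgCount n r) => fun i : Fin n =>
              X1 (fun h => enc 1 (m1 : ℕ) u h.length) (fun h => enc 0 (m2 : ℕ) u h.length) (i : ℕ)) X,
          ?_, ?_, ?_, ?_⟩⟩
  · -- energy1
    intro m1 m2 u hu i _ hst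
    by_contra hX
    have hX' : X1 (fun h => enc 1 (m1 : ℕ) u h.length) (fun h => enc 0 (m2 : ℕ) u h.length) i = true := by
      revert hX; cases (X1 (fun h => enc 1 (m1 : ℕ) u h.length) (fun h => enc 0 (m2 : ℕ) u h.length) i) <;> simp
    rw [X1_enc] at hX'
    unfold enc at hX'
    simp only [decide_eq_true_eq] at hX'
    rw [hstate m1 m2 u hu i] at hst
    rw [if_pos hX'.1, if_pos hX'.1] at hst
    rw [if_pos (le_of_eq (by rw [hX'.2]))] at hst
    exact one_ne_zero hst
  · -- energy2
    intro m1 m2 u hu i _ hst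
    by_contra hX
    have hX' : X2 (fun h => enc 1 (m1 : ℕ) u h.length) (fun h => enc 0 (m2 : ℕ) u h.length) i = true := by
      revert hX; cases (X2 (fun h => enc 1 (m1 : ℕ) u h.length) (fun h => enc 0 (m2 : ℕ) u h.length) i) <;> simp
    rw [X2_enc] at hX'
    unfold enc at hX'
    simp only [decide_eq_true_eq] at hX'
    have hne : ¬((i / 3 + u) % 2 = 1) := by omega
    rw [hstate m1 m2 u hu i] at hst
    rw [if_neg hne, if_neg hne] at hst
    rw [if_pos (le_of_eq (by rw [hX'.2]))] at hst
    norm_num at hst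
  · -- decode1
    intro m1 m2 u hu
    exact Function.leftInverse_invFun (hinj2 m1 u) m2
  · -- decode2
    intro m1 m2 u hu
    exact Function.leftInverse_invFun (hinj1 m2 u) m1



end TwoWayEnergy
end

section
/- Variable-length (interruptible-frame) strategy: The rate pair (R_1, R_2) = (1/3, 1/3), whose sum-rate is R_1 + R_2 = 2/3 bits per channel use, is achievable with U = 1 energy unit. -/
open scoped BigOperators

namespace TwoWayEnergy

-- ===================== auxiliary development =====================

lemma transcript_succ (f g : List Bool → Bool) (i : ℕ) :
    transcript f g (i + 1) =
      ((transcript f g i).1 ++ [f (transcript f g i).2],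
       (transcript f g i).2 ++ [g (transcript f g i).1]) := rfl

lemma transcript_swap (f g : List Bool → Bool) (i : ℕ) :
    transcript f g i = ((transcript g f i).2, (transcript g f i).1) := by
  induction i with
  | zero => rfl
  | succ i ih => rw [transcript_succ, transcript_succ, ih]

lemma X1_swap (f g : List Bool → Bool) (i : ℕ) : X1 f g i = X2 g f i := by
  simp only [X1, X2, transcript_swap f g i]

lemma X2_swap (f g : List Bool → Bool) (i : ℕ) : X2 f g i = X1 g f i := by
  simp only [X1, X2, transcript_swap f g i]

lemma state_add (f g : List Bool → Bool) (u v : ℤ) (i : ℕ) :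
    state f g u i + state g f v i = u + v := by
  induction i with
  | zero => rfl
  | succ i ih =>
    simp only [state, X1_swap f g i, X2_swap f g i]
    cases X1 g f i <;> cases X2 g f i <;> simp <;> omega

/-- A strategy that sends `x` first and then follows `f` on the rest of the history. -/
def consStrat (x : Bool) (f : List Bool → Bool) : List Bool → Bool
  | [] => x
  | _ :: s => f s

/-- A strategy that sends `x` first and then follows `g` or `h` according to the first
received symbol. -/
def branchStrat (x : Bool) (g h : List Bool → Bool) : List Bool → Bool
  | [] => x
  | c :: s => if c then h s else g s

lemma transcript_cons {f g f' g' : List Bool → Bool} {x1 x2 : Bool}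
    (hf0 : f' [] = x1) (hg0 : g' [] = x2)
    (hf : ∀ s, f' (x2 :: s) = f s) (hg : ∀ s, g' (x1 :: s) = g s) (i : ℕ) :
    transcript f' g' (i + 1) =
      (x1 :: (transcript f g i).1, x2 :: (transcript f g i).2) := by
  induction i with
  | zero =>
    rw [transcript_succ]
    simp [transcript, hf0, hg0]
  | succ i ih =>
    rw [transcript_succ, ih, transcript_succ]
    simp [hf, hg]

section ConsLemmas

variable {f g f' g' : List Bool → Bool} {x1 x2 : Bool}
  (hf0 : f' [] = x1) (hg0 : g' [] = x2)
  (hf : ∀ s, f' (x2 :: s) = f s) (hg : ∀ s, g' (x1 :: s) = g s)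

include hf0 hg0 hf hg

lemma X1_cons_zero : X1 f' g' 0 = x1 := hf0

lemma X2_cons_zero : X2 f' g' 0 = x2 := hg0

lemma X1_cons_succ (i : ℕ) : X1 f' g' (i + 1) = X1 f g i := by
  simp only [X1, transcript_cons hf0 hg0 hf hg i]
  exact hf _

lemma X2_cons_succ (i : ℕ) : X2 f' g' (i + 1) = X2 f g i := by
  simp only [X2, transcript_cons hf0 hg0 hf hg i]
  exact hg _

lemma state_cons (u : ℤ) (i : ℕ) :
    state f' g' u (i + 1) =
      state f g (u - (if x1 then 1 else 0) + (if x2 then 1 else 0)) i := by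
  induction i with
  | zero =>
    simp only [state, X1_cons_zero hf0 hg0 hf hg, X2_cons_zero hf0 hg0 hf hg]
  | succ i ih =>
    have l : state f' g' u (i + 1 + 1) = state f' g' u (i + 1)
        - (if X1 f' g' (i + 1) then 1 else 0) + (if X2 f' g' (i + 1) then 1 else 0) := rfl
    rw [l, ih, X1_cons_succ hf0 hg0 hf hg i, X2_cons_succ hf0 hg0 hf hg i]
    rfl

end ConsLemmas

/-- Interactive protocol of length `n` in which the node currently holding the (single)
energy unit has `A` messages and the other node has `B` messages; both nodes recover
the other's message from their received sequence. -/
def Proto (n A B : ℕ) : Prop :=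
  ∃ (e1 : Fin A → List Bool → Bool) (e2 : Fin B → List Bool → Bool)
    (d1 : (Fin n → Bool) → Fin A → Fin B) (d2 : (Fin n → Bool) → Fin B → Fin A),
    ∀ (a : Fin A) (b : Fin B),
      (∀ i < n, state (e1 a) (e2 b) 1 i = 0 → X1 (e1 a) (e2 b) i = false) ∧
      (∀ i < n, state (e1 a) (e2 b) 1 i = 1 → X2 (e1 a) (e2 b) i = false) ∧
      d1 (fun i : Fin n => X2 (e1 a) (e2 b) (i : ℕ)) a = b ∧
      d2 (fun i : Fin n => X1 (e1 a) (e2 b) (i : ℕ)) b = a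

lemma protoOne (n : ℕ) : Proto n 1 1 := by
  refine ⟨fun _ _ => false, fun _ _ => false, fun _ _ => 0, fun _ _ => 0, fun a b => ?_⟩
  exact ⟨fun i _ _ => rfl, fun i _ _ => rfl, Subsingleton.elim _ _, Subsingleton.elim _ _⟩

lemma protoPad {n A B : ℕ} (h : Proto n A B) : Proto (n + 1) A B := by
  obtain ⟨e1, e2, d1, d2, H⟩ := h
  refine ⟨fun a => consStrat false (e1 a), fun b => consStrat false (e2 b),
    fun y a => d1 (fun i => y i.succ) a, fun y b => d2 (fun i => y i.succ) b,
    fun a b => ?_⟩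
  obtain ⟨h1, h2, h3, h4⟩ := H a b
  have hf0 : consStrat false (e1 a) [] = false := rfl
  have hg0 : consStrat false (e2 b) [] = false := rfl
  have hf : ∀ s, consStrat false (e1 a) (false :: s) = e1 a s := fun s => rfl
  have hg : ∀ s, consStrat false (e2 b) (false :: s) = e2 b s := fun s => rfl
  have hst : ∀ i, state (consStrat false (e1 a)) (consStrat false (e2 b)) 1 (i + 1)
      = state (e1 a) (e2 b) 1 i := by
    intro i
    rw [state_cons hf0 hg0 hf hg]
    norm_num
  refine ⟨?_, ?_, ?_, ?_⟩
  · intro i hi hs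
    match i with
    | 0 => exact X1_cons_zero hf0 hg0 hf hg
    | (i+1) =>
      rw [X1_cons_succ hf0 hg0 hf hg]
      exact h1 i (by omega) (by rw [hst i] at hs; exact hs)
  · intro i hi hs
    match i with
    | 0 => exact X2_cons_zero hf0 hg0 hf hg
    | (i+1) =>
      rw [X2_cons_succ hf0 hg0 hf hg]
      exact h2 i (by omega) (by rw [hst i] at hs; exact hs)
  · have hy : (fun i : Fin n =>
        X2 (consStrat false (e1 a)) (consStrat false (e2 b)) ((i : ℕ) + 1))
        = fun i : Fin n => X2 (e1 a) (e2 b) (i : ℕ) :=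
      funext fun i => X2_cons_succ hf0 hg0 hf hg i
    simp only [Fin.val_succ, hy]
    exact h3
  · have hy : (fun i : Fin n =>
        X1 (consStrat false (e1 a)) (consStrat false (e2 b)) ((i : ℕ) + 1))
        = fun i : Fin n => X1 (e1 a) (e2 b) (i : ℕ) :=
      funext fun i => X1_cons_succ hf0 hg0 hf hg i
    simp only [Fin.val_succ, hy]
    exact h4

lemma protoPass {n B q : ℕ} (h : Proto n B q) : Proto (n + 1) q B := by
  obtain ⟨e1, e2, d1, d2, H⟩ := h
  refine ⟨fun m => consStrat true (e2 m), fun b => consStrat false (e1 b),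
    fun y m => d2 (fun i => y i.succ) m, fun y b => d1 (fun i => y i.succ) b,
    fun m b => ?_⟩
  obtain ⟨h1, h2, h3, h4⟩ := H b m
  have hf0 : consStrat true (e2 m) [] = true := rfl
  have hg0 : consStrat false (e1 b) [] = false := rfl
  have hf : ∀ s, consStrat true (e2 m) (false :: s) = e2 m s := fun s => rfl
  have hg : ∀ s, consStrat false (e1 b) (true :: s) = e1 b s := fun s => rfl
  have hst : ∀ i, state (consStrat true (e2 m)) (consStrat false (e1 b)) 1 (i + 1)
      = state (e2 m) (e1 b) 0 i := by
    intro i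
    rw [state_cons hf0 hg0 hf hg]
    norm_num
  have hsum : ∀ i, state (e2 m) (e1 b) 0 i + state (e1 b) (e2 m) 1 i = 1 := by
    intro i
    simpa using state_add (e2 m) (e1 b) 0 1 i
  refine ⟨?_, ?_, ?_, ?_⟩
  · intro i hi hs
    match i with
    | 0 => simp [state] at hs
    | (i+1) =>
      rw [hst i] at hs
      have hs' : state (e1 b) (e2 m) 1 i = 1 := by have := hsum i; omega
      rw [X1_cons_succ hf0 hg0 hf hg, X1_swap]
      exact h2 i (by omega) hs'
  · intro i hi hs
    match i with
    | 0 => exact X2_cons_zero hf0 hg0 hf hg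
    | (i+1) =>
      rw [hst i] at hs
      have hs' : state (e1 b) (e2 m) 1 i = 0 := by have := hsum i; omega
      rw [X2_cons_succ hf0 hg0 hf hg, X2_swap]
      exact h1 i (by omega) hs'
  · have hy : (fun i : Fin n =>
        X2 (consStrat true (e2 m)) (consStrat false (e1 b)) ((i : ℕ) + 1))
        = fun i : Fin n => X1 (e1 b) (e2 m) (i : ℕ) := by
      funext i
      rw [X2_cons_succ hf0 hg0 hf hg, X2_swap]
    simp only [Fin.val_succ, hy]
    exact h4
  · have hy : (fun i : Fin n =>
        X1 (consStrat true (e2 m)) (consStrat false (e1 b)) ((i : ℕ) + 1))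
        = fun i : Fin n => X2 (e1 b) (e2 m) (i : ℕ) := by
      funext i
      rw [X1_cons_succ hf0 hg0 hf hg, X1_swap]
    simp only [Fin.val_succ, hy]
    exact h3

lemma protoSplit {n p q B : ℕ} (h1 : Proto n p B) (h2 : Proto n B q) :
    Proto (n + 1) (p + q) B := by
  obtain ⟨e1, e2, d1, d2, H1⟩ := h1
  obtain ⟨E1, E2, D1, D2, H2⟩ := h2
  refine ⟨fun m => if h : (m : ℕ) < p then consStrat false (e1 ⟨(m : ℕ), h⟩)
      else consStrat true (E2 ⟨(m : ℕ) - p, by have := m.isLt; omega⟩),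
    fun b => branchStrat false (e2 b) (E1 b),
    fun y m => if h : (m : ℕ) < p then
        Fin.castLE (by omega) (d1 (fun i => y i.succ) ⟨(m : ℕ), h⟩)
      else D2 (fun i => y i.succ) ⟨(m : ℕ) - p, by have := m.isLt; omega⟩,
    fun y b => if y 0 then ⟨p + (D1 (fun i => y i.succ) b : ℕ),
        by have := (D1 (fun i => y i.succ) b).isLt; omega⟩
      else ⟨(d2 (fun i => y i.succ) b : ℕ),
        by have := (d2 (fun i => y i.succ) b).isLt; omega⟩,
    fun m b => ?_⟩
  by_cases hm : (m : ℕ) < p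
  · -- holder's message lies in the first part: send 0, run the first protocol
    simp only [dif_pos hm]
    set a : Fin p := ⟨(m : ℕ), hm⟩ with ha
    obtain ⟨h1, h2, h3, h4⟩ := H1 a b
    have hf0 : consStrat false (e1 a) [] = false := rfl
    have hg0 : branchStrat false (e2 b) (E1 b) [] = false := rfl
    have hf : ∀ s, consStrat false (e1 a) (false :: s) = e1 a s := fun s => rfl
    have hg : ∀ s, branchStrat false (e2 b) (E1 b) (false :: s) = e2 b s := fun s => rfl
    have hst : ∀ i, state (consStrat false (e1 a)) (branchStrat false (e2 b) (E1 b)) 1 (i + 1)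
        = state (e1 a) (e2 b) 1 i := by
      intro i
      rw [state_cons hf0 hg0 hf hg]
      norm_num
    refine ⟨?_, ?_, ?_, ?_⟩
    · intro i hi hs
      match i with
      | 0 => exact X1_cons_zero hf0 hg0 hf hg
      | (i+1) =>
        rw [X1_cons_succ hf0 hg0 hf hg]
        exact h1 i (by omega) (by rw [hst i] at hs; exact hs)
    · intro i hi hs
      match i with
      | 0 => exact X2_cons_zero hf0 hg0 hf hg
      | (i+1) =>
        rw [X2_cons_succ hf0 hg0 hf hg]
        exact h2 i (by omega) (by rw [hst i] at hs; exact hs)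
    · have hy : (fun i : Fin n =>
          X2 (consStrat false (e1 a)) (branchStrat false (e2 b) (E1 b)) ((i : ℕ) + 1))
          = fun i : Fin n => X2 (e1 a) (e2 b) (i : ℕ) :=
        funext fun i => X2_cons_succ hf0 hg0 hf hg i
      rw [ha] at hy h3
      simp only [Fin.val_succ, hy, h3]
      exact Fin.ext rfl
    · have hy : (fun i : Fin n =>
          X1 (consStrat false (e1 a)) (branchStrat false (e2 b) (E1 b)) ((i : ℕ) + 1))
          = fun i : Fin n => X1 (e1 a) (e2 b) (i : ℕ) :=
        funext fun i => X1_cons_succ hf0 hg0 hf hg i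
      have h0 : X1 (consStrat false (e1 a)) (branchStrat false (e2 b) (E1 b))
          ((0 : Fin (n+1)) : ℕ) = false := by
        rw [Fin.val_zero]
        exact X1_cons_zero hf0 hg0 hf hg
      rw [ha] at hy h0 h4
      simp only [Fin.val_succ, hy, h0, Bool.false_eq_true, if_false, h4]
  · -- holder's message lies in the second part: send 1, pass energy, run the second protocol
    simp only [dif_neg hm]
    set m' : Fin q := ⟨(m : ℕ) - p, by have := m.isLt; omega⟩ with hm'
    obtain ⟨h1, h2, h3, h4⟩ := H2 b m'
    have hf0 : consStrat true (E2 m') [] = true := rfl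
    have hg0 : branchStrat false (e2 b) (E1 b) [] = false := rfl
    have hf : ∀ s, consStrat true (E2 m') (false :: s) = E2 m' s := fun s => rfl
    have hg : ∀ s, branchStrat false (e2 b) (E1 b) (true :: s) = E1 b s := fun s => rfl
    have hst : ∀ i, state (consStrat true (E2 m')) (branchStrat false (e2 b) (E1 b)) 1 (i + 1)
        = state (E2 m') (E1 b) 0 i := by
      intro i
      rw [state_cons hf0 hg0 hf hg]
      norm_num
    have hsum : ∀ i, state (E2 m') (E1 b) 0 i + state (E1 b) (E2 m') 1 i = 1 := by
      intro i
      simpa using state_add (E2 m') (E1 b) 0 1 i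
    refine ⟨?_, ?_, ?_, ?_⟩
    · intro i hi hs
      match i with
      | 0 => simp [state] at hs
      | (i+1) =>
        rw [hst i] at hs
        have hs' : state (E1 b) (E2 m') 1 i = 1 := by have := hsum i; omega
        rw [X1_cons_succ hf0 hg0 hf hg, X1_swap]
        exact h2 i (by omega) hs'
    · intro i hi hs
      match i with
      | 0 => exact X2_cons_zero hf0 hg0 hf hg
      | (i+1) =>
        rw [hst i] at hs
        have hs' : state (E1 b) (E2 m') 1 i = 0 := by have := hsum i; omega
        rw [X2_cons_succ hf0 hg0 hf hg, X2_swap]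
        exact h1 i (by omega) hs'
    · have hy : (fun i : Fin n =>
          X2 (consStrat true (E2 m')) (branchStrat false (e2 b) (E1 b)) ((i : ℕ) + 1))
          = fun i : Fin n => X1 (E1 b) (E2 m') (i : ℕ) := by
        funext i
        rw [X2_cons_succ hf0 hg0 hf hg, X2_swap]
      rw [hm'] at hy h4
      simp only [Fin.val_succ, hy, h4]
    · have hy : (fun i : Fin n =>
          X1 (consStrat true (E2 m')) (branchStrat false (e2 b) (E1 b)) ((i : ℕ) + 1))
          = fun i : Fin n => X2 (E1 b) (E2 m') (i : ℕ) := by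
        funext i
        rw [X1_cons_succ hf0 hg0 hf hg, X1_swap]
      have h0 : X1 (consStrat true (E2 m')) (branchStrat false (e2 b) (E1 b))
          ((0 : Fin (n+1)) : ℕ) = true := by
        rw [Fin.val_zero]
        exact X1_cons_zero hf0 hg0 hf hg
      rw [hm'] at hy h0 h3
      simp only [Fin.val_succ, hy, h0, if_true, h3]
      refine Fin.ext ?_
      show p + ((m : ℕ) - p) = (m : ℕ)
      omega

lemma protoSplit' {n p q A B : ℕ} (h1 : Proto n p B) (h2 : Proto n B q)
    (hA : p + q = A) : Proto (n + 1) A B := hA ▸ protoSplit h1 h2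

lemma protoMono {n A B A' B' : ℕ} (h : Proto n A B) (hA0 : 0 < A') (hB0 : 0 < B')
    (hA : A' ≤ A) (hB : B' ≤ B) : Proto n A' B' := by
  obtain ⟨e1, e2, d1, d2, H⟩ := h
  refine ⟨fun a => e1 (Fin.castLE hA a), fun b => e2 (Fin.castLE hB b),
    fun y a => if h : (d1 y (Fin.castLE hA a) : ℕ) < B' then ⟨_, h⟩ else ⟨0, hB0⟩,
    fun y b => if h : (d2 y (Fin.castLE hB b) : ℕ) < A' then ⟨_, h⟩ else ⟨0, hA0⟩,
    fun a b => ?_⟩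
  obtain ⟨h1, h2, h3, h4⟩ := H (Fin.castLE hA a) (Fin.castLE hB b)
  refine ⟨h1, h2, ?_, ?_⟩
  · simp only [h3]
    rw [dif_pos (show ((Fin.castLE hB b : Fin B) : ℕ) < B' from b.isLt)]
    rfl
  · simp only [h4]
    rw [dif_pos (show ((Fin.castLE hA a : Fin A) : ℕ) < A' from a.isLt)]
    rfl

lemma protoDouble {m A : ℕ} (h : Proto m A A) : Proto (m + 3) (A + A) (A + A) := by
  have h1 : Proto (m + 1) (A + A) A := protoSplit h h
  have h2 : Proto (m + 2) A (A + A) := protoPass h1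
  have h3 : Proto (m + 2) (A + A) A := protoPad h1
  exact protoSplit h2 h3

lemma protoBase : Proto 6 4 4 ∧ Proto 7 6 6 ∧ Proto 8 7 7 := by
  have p0_1_1 : Proto 0 1 1 := protoOne 0
  have p1_2_1 : Proto 1 2 1 := protoSplit' p0_1_1 p0_1_1 (by norm_num)
  have p2_2_1 : Proto 2 2 1 := protoPad p1_2_1
  have p2_1_2 : Proto 2 1 2 := protoPass p1_2_1
  have p3_4_1 : Proto 3 4 1 := protoSplit' p2_2_1 p2_1_2 (by norm_num)
  have p4_1_4 : Proto 4 1 4 := protoPass p3_4_1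
  have p5_1_4 : Proto 5 1 4 := protoPad p4_1_4
  have p1_1_1 : Proto 1 1 1 := protoOne 1
  have p2_3_1 : Proto 2 3 1 := protoSplit' p1_2_1 p1_1_1 (by norm_num)
  have p3_1_3 : Proto 3 1 3 := protoPass p2_3_1
  have p3_3_1 : Proto 3 3 1 := protoPad p2_3_1
  have p4_2_3 : Proto 4 2 3 := protoSplit' p3_1_3 p3_3_1 (by norm_num)
  have p3_1_2 : Proto 3 1 2 := protoPad p2_1_2
  have p3_2_2 : Proto 3 2 2 := protoSplit' p2_1_2 p2_2_1 (by norm_num)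
  have p4_3_2 : Proto 4 3 2 := protoSplit' p3_1_2 p3_2_2 (by norm_num)
  have p5_4_3 : Proto 5 4 3 := protoSplit' p4_2_3 p4_3_2 (by norm_num)
  have p6_4_4 : Proto 6 4 4 := protoSplit' p5_1_4 p5_4_3 (by norm_num)
  have p5_6_2 : Proto 5 6 2 := protoSplit' p4_3_2 p4_2_3 (by norm_num)
  have p6_2_6 : Proto 6 2 6 := protoPass p5_6_2
  have p4_4_2 : Proto 4 4 2 := protoSplit' p3_2_2 p3_2_2 (by norm_num)
  have p5_3_4 : Proto 5 3 4 := protoSplit' p4_1_4 p4_4_2 (by norm_num)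
  have p6_6_4 : Proto 6 6 4 := protoSplit' p5_3_4 p5_4_3 (by norm_num)
  have p7_6_6 : Proto 7 6 6 := protoSplit' p6_2_6 p6_6_4 (by norm_num)
  have p4_7_1 : Proto 4 7 1 := protoSplit' p3_4_1 p3_1_3 (by norm_num)
  have p5_1_7 : Proto 5 1 7 := protoPass p4_7_1
  have p6_1_7 : Proto 6 1 7 := protoPad p5_1_7
  have p7_1_7 : Proto 7 1 7 := protoPad p6_1_7
  have p4_6_1 : Proto 4 6 1 := protoSplit' p3_3_1 p3_1_3 (by norm_num)
  have p5_1_6 : Proto 5 1 6 := protoPass p4_6_1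
  have p6_3_6 : Proto 6 3 6 := protoSplit' p5_1_6 p5_6_2 (by norm_num)
  have p7_7_6 : Proto 7 7 6 := protoSplit' p6_3_6 p6_6_4 (by norm_num)
  have p8_7_7 : Proto 8 7 7 := protoSplit' p7_1_7 p7_7_6 (by norm_num)
  exact ⟨p6_4_4, p7_6_6, p8_7_7⟩

/-- `T k` messages for each node are achievable with blocklength `k + 6`. -/
def T : ℕ → ℕ
  | 0 => 4
  | 1 => 6
  | 2 => 7
  | (k + 3) => 2 * T k

lemma protoT : ∀ k, Proto (k + 6) (T k) (T k) := by
  intro k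
  induction k using Nat.strong_induction_on with
  | _ k ih =>
    match k with
    | 0 => exact protoBase.1
    | 1 => exact protoBase.2.1
    | 2 => exact protoBase.2.2
    | (k + 3) =>
      have h := protoDouble (ih k (by omega))
      have e1 : k + 6 + 3 = k + 3 + 6 := by omega
      have e2 : T (k + 3) = T k + T k := by
        show 2 * T k = T k + T k
        omega
      rw [e1] at h
      rw [e2]
      exact h

lemma cube_le {m : ℕ} {y : ℝ} (hy : 0 ≤ y) (h : (2 : ℝ) ^ m ≤ y ^ 3) :
    (2 : ℝ) ^ ((m : ℝ) / 3) ≤ y := by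
  have h2 : (0 : ℝ) ≤ (2 : ℝ) ^ ((m : ℝ) / 3) := (Real.rpow_pos_of_pos (by norm_num) _).le
  rw [← pow_le_pow_iff_left₀ h2 hy (show 3 ≠ 0 by norm_num)]
  calc ((2 : ℝ) ^ ((m : ℝ) / 3)) ^ 3
      = (2 : ℝ) ^ (((m : ℝ) / 3) * ((3 : ℕ) : ℝ)) := by
        rw [← Real.rpow_natCast ((2 : ℝ) ^ ((m : ℝ) / 3)) 3, ← Real.rpow_mul (by norm_num)]
    _ = (2 : ℝ) ^ (m : ℝ) := by norm_num
    _ = (2 : ℝ) ^ m := by rw [Real.rpow_natCast]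
    _ ≤ y ^ 3 := h

lemma T_lower : ∀ k : ℕ, (2 : ℝ) ^ (((k : ℝ) + 6) / 3) ≤ (T k : ℝ) := by
  intro k
  induction k using Nat.strong_induction_on with
  | _ k ih =>
    match k with
    | 0 =>
      have h := cube_le (m := 6) (y := (4 : ℝ)) (by norm_num) (by norm_num)
      simpa [T] using h
    | 1 =>
      have h := cube_le (m := 7) (y := (6 : ℝ)) (by norm_num) (by norm_num)
      have e : (((1 : ℕ) : ℝ) + 6) / 3 = ((7 : ℕ) : ℝ) / 3 := by norm_num
      rw [e]
      simpa [T] using h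
    | 2 =>
      have h := cube_le (m := 8) (y := (7 : ℝ)) (by norm_num) (by norm_num)
      have e : (((2 : ℕ) : ℝ) + 6) / 3 = ((8 : ℕ) : ℝ) / 3 := by norm_num
      rw [e]
      simpa [T] using h
    | (k + 3) =>
      have h := ih k (by omega)
      have e : ((((k : ℕ) + 3 : ℕ) : ℝ) + 6) / 3 = ((k : ℝ) + 6) / 3 + 1 := by
        push_cast
        ring
      rw [e, Real.rpow_add (by norm_num), Real.rpow_one]
      have eT : (T (k + 3) : ℝ) = 2 * (T k : ℝ) := by
        show ((2 * T k : ℕ) : ℝ) = _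
        push_cast
        ring
      rw [eT]
      nlinarith [h]

lemma msgCount_le {n : ℕ} (hn : 6 ≤ n) : msgCount n (1 / 3) ≤ T (n - 6) := by
  have h := T_lower (n - 6)
  have e : (((n - 6 : ℕ) : ℝ) + 6) / 3 = (n : ℝ) * (1 / 3) := by
    have : ((n - 6 : ℕ) : ℝ) = (n : ℝ) - 6 := by
      push_cast [Nat.cast_sub hn]
      ring
    rw [this]
    ring
  rw [e] at h
  exact Nat.ceil_le.mpr h

lemma msgCount_pos (n : ℕ) : 0 < msgCount n (1 / 3) :=
  Nat.ceil_pos.mpr (Real.rpow_pos_of_pos (by norm_num) _)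

lemma code_of_proto {n : ℕ}
    (h : Proto n (msgCount n (1 / 3)) (msgCount n (1 / 3))) :
    Nonempty (Code n (1 / 3) (1 / 3) 1) := by
  obtain ⟨e1, e2, d1, d2, H⟩ := h
  refine ⟨⟨fun m u => if u = 0 then e2 m else e1 m,
    fun m u => if u = 0 then e1 m else e2 m,
    fun y m u => if u = 0 then d2 y m else d1 y m,
    fun y m u => if u = 0 then d1 y m else d2 y m, ?_, ?_, ?_, ?_⟩⟩
  · intro m1 m2 u hu i hi hs
    interval_cases u
    · replace hs : state (e2 m1) (e1 m2) 0 i = 0 := hs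
      have hsum := state_add (e2 m1) (e1 m2) 0 1 i
      have hs' : state (e1 m2) (e2 m1) 1 i = 1 := by omega
      show X1 (e2 m1) (e1 m2) i = false
      rw [X1_swap]
      exact (H m2 m1).2.1 i hi hs'
    · replace hs : state (e1 m1) (e2 m2) 1 i = 0 := hs
      exact (H m1 m2).1 i hi hs
  · intro m1 m2 u hu i hi hs
    interval_cases u
    · replace hs : state (e2 m1) (e1 m2) 0 i = 1 := hs
      have hsum := state_add (e2 m1) (e1 m2) 0 1 i
      have hs' : state (e1 m2) (e2 m1) 1 i = 0 := by omega
      show X2 (e2 m1) (e1 m2) i = false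
      rw [X2_swap]
      exact (H m2 m1).1 i hi hs'
    · replace hs : state (e1 m1) (e2 m2) 1 i = 1 := hs
      exact (H m1 m2).2.1 i hi hs
  · intro m1 m2 u hu
    interval_cases u
    · show d2 (fun i : Fin n => X2 (e2 m1) (e1 m2) (i : ℕ)) m1 = m2
      have hy : (fun i : Fin n => X2 (e2 m1) (e1 m2) (i : ℕ))
          = fun i : Fin n => X1 (e1 m2) (e2 m1) (i : ℕ) :=
        funext fun i => X2_swap _ _ _
      rw [hy]
      exact (H m2 m1).2.2.2
    · show d1 (fun i : Fin n => X2 (e1 m1) (e2 m2) (i : ℕ)) m1 = m2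
      exact (H m1 m2).2.2.1
  · intro m1 m2 u hu
    interval_cases u
    · show d1 (fun i : Fin n => X1 (e2 m1) (e1 m2) (i : ℕ)) m2 = m1
      have hy : (fun i : Fin n => X1 (e2 m1) (e1 m2) (i : ℕ))
          = fun i : Fin n => X2 (e1 m2) (e2 m1) (i : ℕ) :=
        funext fun i => X1_swap _ _ _
      rw [hy]
      exact (H m2 m1).2.2.1
    · show d2 (fun i : Fin n => X1 (e1 m1) (e2 m2) (i : ℕ)) m2 = m1
      exact (H m1 m2).2.2.2

/-- **Variable-length (interruptible-frame) strategy.** The rate pair `(1/3, 1/3)`,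
whose sum-rate is `2/3` bits per channel use, is achievable with `U = 1` energy unit. -/
theorem variable_length_strategy :
    (1 / 3 : ℝ) + 1 / 3 = 2 / 3 ∧ Achievable 1 (1 / 3 : ℝ) (1 / 3 : ℝ) := by
  refine ⟨by norm_num, by norm_num, by norm_num, 6, fun n hn => ?_⟩
  have hp := protoT (n - 6)
  have e : n - 6 + 6 = n := by omega
  rw [e] at hp
  exact code_of_proto (protoMono hp (msgCount_pos n) (msgCount_pos n)
    (msgCount_le hn) (msgCount_le hn))

end TwoWayEnergy
end
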